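/- For the graph G on m+n vertices which is the disjoint union of complete graphs K_m and K_n (the complement of K_{m,n}), ε(G) = m(m-1)(m-2)/2 + n(n-1)(n-2)/2 + C(m,2)·C(n,2). -/

import Mathlib

open Finset SimpleGraph

/-- A 4-cycle exists within the vertex set `s` of the graph `G`. -/
def fourCycleOn {V : Type*} (G : SimpleGraph V) (s : Set V) : Prop :=
  ∃ a b c d, a ∈ s ∧ b ∈ s ∧ c ∈ s ∧ d ∈ s ∧
    a ≠ b ∧ a ≠ c ∧ a ≠ d ∧ b ≠ c ∧ b ≠ d ∧ c ≠ d ∧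
    G.Adj a b ∧ G.Adj b c ∧ G.Adj c d ∧ G.Adj d a

/-- The pair of edges `{e,f}` spans an edge of the edge polytope: they share a
vertex, or they are disjoint and the induced subgraph on their endpoints has no 4-cycle. -/
def epPair {V : Type*} (G : SimpleGraph V) (e f : Sym2 V) : Prop :=
  (∃ v, v ∈ e ∧ v ∈ f) ∨
  ((¬ ∃ v, v ∈ e ∧ v ∈ f) ∧ ¬ fourCycleOn G {v | v ∈ e ∨ v ∈ f})

open scoped Classical in
/-- The number of edges (1-dimensional faces) of the edge polytope of `G`:
the number of unordered pairs of distinct edges satisfying `epPair`. -/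
noncomputable def epsilon {V : Type*} [Fintype V] (G : SimpleGraph V) : ℕ :=
  ((G.edgeFinset.powersetCard 2).filter
    (fun s => ∀ e ∈ s, ∀ f ∈ s, e ≠ f → epPair G e f)).card

open scoped Classical in
/-- number of 4-subsets inducing a path of length 3. -/
noncomputable def aCount {V : Type*} [Fintype V] (H : SimpleGraph V) : ℕ :=
  ((univ.powersetCard 4).filter (fun s => ∃ a b c d : V,
    s = {a, b, c, d} ∧ a ≠ b ∧ a ≠ c ∧ a ≠ d ∧ b ≠ c ∧ b ≠ d ∧ c ≠ d ∧
    H.Adj a b ∧ H.Adj b c ∧ H.Adj c d ∧ ¬H.Adj a c ∧ ¬H.Adj a d ∧ ¬H.Adj b d)).card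

open scoped Classical in
/-- number of 4-subsets inducing a cycle of length 4. -/
noncomputable def bCount {V : Type*} [Fintype V] (H : SimpleGraph V) : ℕ :=
  ((univ.powersetCard 4).filter (fun s => ∃ a b c d : V,
    s = {a, b, c, d} ∧ a ≠ b ∧ a ≠ c ∧ a ≠ d ∧ b ≠ c ∧ b ≠ d ∧ c ≠ d ∧
    H.Adj a b ∧ H.Adj b c ∧ H.Adj c d ∧ H.Adj d a ∧ ¬H.Adj a c ∧ ¬H.Adj b d)).card

open scoped Classical in
/-- number of 4-subsets inducing a path of length 2 plus an isolated vertex. -/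
noncomputable def cCount {V : Type*} [Fintype V] (H : SimpleGraph V) : ℕ :=
  ((univ.powersetCard 4).filter (fun s => ∃ a b c d : V,
    s = {a, b, c, d} ∧ a ≠ b ∧ a ≠ c ∧ a ≠ d ∧ b ≠ c ∧ b ≠ d ∧ c ≠ d ∧
    H.Adj a b ∧ H.Adj b c ∧ ¬H.Adj a c ∧ ¬H.Adj a d ∧ ¬H.Adj b d ∧ ¬H.Adj c d)).card

open scoped Classical in
/-- the number of triangles of `H`. -/
noncomputable def k3 {V : Type*} [Fintype V] (H : SimpleGraph V) : ℕ :=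
  ((univ.powersetCard 3).filter (fun s => ∀ i ∈ s, ∀ j ∈ s, i ≠ j → H.Adj i j)).card

open scoped Classical in
/-- the number of 3-subsets inducing a path with exactly two edges. -/
noncomputable def psi {V : Type*} [Fintype V] (H : SimpleGraph V) : ℕ :=
  ((univ.powersetCard 3).filter (fun s => ∃ a b c : V,
    s = {a, b, c} ∧ a ≠ b ∧ a ≠ c ∧ b ≠ c ∧ H.Adj a b ∧ H.Adj b c ∧ ¬H.Adj a c)).card

/-- the complete bipartite graph `K_{m,n}` on the vertex set `[d]`, with parts
`{0,…,m-1}` and `{m,…,m+n-1}`. -/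
def bip (d m n : ℕ) : SimpleGraph (Fin d) where
  Adj i j := ((i : ℕ) < m ∧ m ≤ (j : ℕ) ∧ (j : ℕ) < m + n) ∨
    ((j : ℕ) < m ∧ m ≤ (i : ℕ) ∧ (i : ℕ) < m + n)
  symm := by constructor; intro i j h; tauto
  loopless := by constructor; intro i h; omega

/-- the copy of `H` on the first `r` vertices of `[d]`. -/
def embedGraph {r : ℕ} (H : SimpleGraph (Fin r)) (d : ℕ) : SimpleGraph (Fin d) where
  Adj i j := ∃ (hi : (i : ℕ) < r) (hj : (j : ℕ) < r), H.Adj ⟨i, hi⟩ ⟨j, hj⟩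
  symm := by constructor; rintro i j ⟨hi, hj, h⟩; exact ⟨hj, hi, h.symm⟩
  loopless := by constructor; rintro i ⟨hi, hj, h⟩; exact h.ne rfl

/-- the subgraph of `H` consisting of the edges in the connected component `c`. -/
def compGraph {V : Type*} (H : SimpleGraph V) (c : H.ConnectedComponent) :
    SimpleGraph V where
  Adj i j := H.Adj i j ∧ H.connectedComponentMk i = c
  symm := by
    constructor
    rintro i j ⟨h, hc⟩
    exact ⟨h.symm, (SimpleGraph.ConnectedComponent.sound h.symm.reachable).trans hc⟩
  loopless := by constructor; rintro i ⟨h, _⟩; exact h.ne rfl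

open scoped Classical in
/-- `|X_{i,j}|`: the number of vertices (other than `i, j`) adjacent to `i` but not `j`. -/
noncomputable def cardX {V : Type*} [Fintype V] (H : SimpleGraph V) (i j : V) : ℕ :=
  (univ.filter (fun ℓ => ℓ ≠ i ∧ ℓ ≠ j ∧ H.Adj i ℓ ∧ ¬ H.Adj j ℓ)).card


namespace EpsAux
variable {m n : ℕ}
abbrev VV (m n : ℕ) := Fin m ⊕ Fin n
abbrev GG (m n : ℕ) : SimpleGraph (VV m n) := (completeBipartiteGraph (Fin m) (Fin n))ᶜ

lemma adj_ll (a b : Fin m) : (GG m n).Adj (.inl a) (.inl b) ↔ a ≠ b := by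
  simp [GG, completeBipartiteGraph, Sum.inl_injective.ne_iff]
lemma adj_rr (a b : Fin n) : (GG m n).Adj (.inr a) (.inr b) ↔ a ≠ b := by
  simp [GG, completeBipartiteGraph, Sum.inr_injective.ne_iff]
lemma adj_lr (a : Fin m) (b : Fin n) : ¬ (GG m n).Adj (.inl a) (.inr b) := by
  simp [GG, completeBipartiteGraph]
lemma adj_rl (a : Fin n) (b : Fin m) : ¬ (GG m n).Adj (.inr a) (.inl b) := by
  simp [GG, completeBipartiteGraph]
lemma adj_side {u v : VV m n} (h : (GG m n).Adj u v) : u.isLeft = v.isLeft := by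
  rcases u with a | a <;> rcases v with b | b <;> simp
  · exact adj_lr a b h
  · exact adj_rl a b h

lemma sym2_inl_eq {x y z w : Fin m} :
    (s((Sum.inl x : VV m n), Sum.inl y) = s(Sum.inl z, Sum.inl w)) ↔
      (x = z ∧ y = w ∨ x = w ∧ y = z) := by
  rw [Sym2.eq_iff]; simp

lemma sym2_inr_eq {x y z w : Fin n} :
    (s((Sum.inr x : VV m n), Sum.inr y) = s(Sum.inr z, Sum.inr w)) ↔
      (x = z ∧ y = w ∨ x = w ∧ y = z) := by
  rw [Sym2.eq_iff]; simp

open scoped Classical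

noncomputable def FL (m n : ℕ) : Finset (Sym2 (VV m n)) :=
  (GG m n).edgeFinset.filter (fun e => ∀ v ∈ e, v.isLeft)
noncomputable def FR (m n : ℕ) : Finset (Sym2 (VV m n)) :=
  (GG m n).edgeFinset.filter (fun e => ∀ v ∈ e, v.isRight)

lemma mem_FL {e : Sym2 (VV m n)} :
    e ∈ FL m n ↔ ∃ a b : Fin m, a ≠ b ∧ e = s(.inl a, .inl b) := by
  constructor
  · rintro he
    rw [FL, mem_filter, mem_edgeFinset] at he
    induction e with
    | _ u v =>
      obtain ⟨hadj, hside⟩ := he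
      rw [mem_edgeSet] at hadj
      rcases u with a | a <;> rcases v with b | b
      · exact ⟨a, b, (adj_ll a b).1 hadj, rfl⟩
      · exact (adj_lr a b hadj).elim
      · exact (adj_rl a b hadj).elim
      · simpa using hside (.inr a) (by simp)
  · rintro ⟨a, b, hab, rfl⟩
    rw [FL, mem_filter, mem_edgeFinset, mem_edgeSet]
    refine ⟨(adj_ll a b).2 hab, ?_⟩
    intro v hv
    rcases Sym2.mem_iff.1 hv with rfl | rfl <;> rfl

lemma mem_FR {e : Sym2 (VV m n)} :
    e ∈ FR m n ↔ ∃ a b : Fin n, a ≠ b ∧ e = s(.inr a, .inr b) := by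
  constructor
  · rintro he
    rw [FR, mem_filter, mem_edgeFinset] at he
    induction e with
    | _ u v =>
      obtain ⟨hadj, hside⟩ := he
      rw [mem_edgeSet] at hadj
      rcases u with a | a <;> rcases v with b | b
      · simpa using hside (.inl a) (by simp)
      · exact (adj_lr a b hadj).elim
      · exact (adj_rl a b hadj).elim
      · exact ⟨a, b, (adj_rr a b).1 hadj, rfl⟩
  · rintro ⟨a, b, hab, rfl⟩
    rw [FR, mem_filter, mem_edgeFinset, mem_edgeSet]
    refine ⟨(adj_rr a b).2 hab, ?_⟩
    intro v hv
    rcases Sym2.mem_iff.1 hv with rfl | rfl <;> rfl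

lemma FL_union_FR : FL m n ∪ FR m n = (GG m n).edgeFinset := by
  ext e
  simp only [mem_union, mem_FL, mem_FR, mem_edgeFinset, mem_edgeSet]
  constructor
  · rintro (⟨a, b, hab, rfl⟩ | ⟨a, b, hab, rfl⟩)
    · exact (adj_ll a b).2 hab
    · exact (adj_rr a b).2 hab
  · induction e with
    | _ u v =>
      intro hadj
      rcases u with a | a <;> rcases v with b | b
      · exact Or.inl ⟨a, b, (adj_ll a b).1 hadj, rfl⟩
      · exact (adj_lr a b hadj).elim
      · exact (adj_rl a b hadj).elim
      · exact Or.inr ⟨a, b, (adj_rr a b).1 hadj, rfl⟩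

lemma FL_disj_FR : Disjoint (FL m n) (FR m n) := by
  rw [Finset.disjoint_left]
  rintro e he he'
  obtain ⟨a, b, hab, rfl⟩ := mem_FL.1 he
  obtain ⟨c, d, hcd, h⟩ := mem_FR.1 he'
  rw [Sym2.eq_iff] at h
  rcases h with ⟨h, -⟩ | ⟨h, -⟩ <;> exact Sum.inl_ne_inr h

lemma FL_sub : FL m n ⊆ (GG m n).edgeFinset := filter_subset _ _
lemma FR_sub : FR m n ⊆ (GG m n).edgeFinset := filter_subset _ _

lemma card_FL : (FL m n).card = m.choose 2 := by
  have : FL m n = ((⊤ : SimpleGraph (Fin m)).edgeFinset).map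
      ⟨Sym2.map Sum.inl, Sym2.map.injective Sum.inl_injective⟩ := by
    ext e
    simp only [mem_map, Function.Embedding.coeFn_mk, mem_FL]
    constructor
    · rintro ⟨a, b, hab, rfl⟩
      exact ⟨s(a, b), by simp [hab], rfl⟩
    · rintro ⟨e', he', rfl⟩
      induction e' with
      | _ a b =>
        rw [mem_edgeFinset, mem_edgeSet, top_adj] at he'
        exact ⟨a, b, he', rfl⟩
  rw [this, Finset.card_map, SimpleGraph.card_edgeFinset_top_eq_card_choose_two,
    Fintype.card_fin]

lemma card_FR : (FR m n).card = n.choose 2 := by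
  have : FR m n = ((⊤ : SimpleGraph (Fin n)).edgeFinset).map
      ⟨Sym2.map Sum.inr, Sym2.map.injective Sum.inr_injective⟩ := by
    ext e
    simp only [mem_map, Function.Embedding.coeFn_mk, mem_FR]
    constructor
    · rintro ⟨a, b, hab, rfl⟩
      exact ⟨s(a, b), by simp [hab], rfl⟩
    · rintro ⟨e', he', rfl⟩
      induction e' with
      | _ a b =>
        rw [mem_edgeFinset, mem_edgeSet, top_adj] at he'
        exact ⟨a, b, he', rfl⟩
  rw [this, Finset.card_map, SimpleGraph.card_edgeFinset_top_eq_card_choose_two,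
    Fintype.card_fin]

lemma epPair_symm {V : Type*} {G : SimpleGraph V} {e f : Sym2 V} (h : epPair G e f) :
    epPair G f e := by
  have hset : {v | v ∈ f ∨ v ∈ e} = {v | v ∈ e ∨ v ∈ f} := by
    ext v; exact or_comm
  rcases h with ⟨v, h1, h2⟩ | ⟨h1, h2⟩
  · exact Or.inl ⟨v, h2, h1⟩
  · refine Or.inr ⟨fun ⟨v, hv1, hv2⟩ => h1 ⟨v, hv2, hv1⟩, ?_⟩
    rw [hset]; exact h2

lemma epPair_cross {a b : Fin m} {c d : Fin n} :
    epPair (GG m n) s(.inl a, .inl b) s(.inr c, .inr d) := by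
  refine Or.inr ⟨?_, ?_⟩
  · rintro ⟨v, hv1, hv2⟩
    rcases Sym2.mem_iff.1 hv1 with rfl | rfl <;>
      rcases Sym2.mem_iff.1 hv2 with h | h <;> exact Sum.inl_ne_inr h
  · rintro ⟨w, x, y, z, hw, hx, hy, hz, hwx, hwy, hwz, hxy, hxz, hyz, awx, axy, ayz, azw⟩
    have keyL : ∀ v : VV m n, (v ∈ s((Sum.inl a : VV m n), Sum.inl b) ∨
        v ∈ s((Sum.inr c : VV m n), Sum.inr d)) → v.isLeft = true →
        v = Sum.inl a ∨ v = Sum.inl b := by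
      rintro v (hv | hv) hL
      · exact Sym2.mem_iff.1 hv
      · rcases Sym2.mem_iff.1 hv with rfl | rfl <;> simp at hL
    have keyR : ∀ v : VV m n, (v ∈ s((Sum.inl a : VV m n), Sum.inl b) ∨
        v ∈ s((Sum.inr c : VV m n), Sum.inr d)) → v.isLeft = false →
        v = Sum.inr c ∨ v = Sum.inr d := by
      rintro v (hv | hv) hL
      · rcases Sym2.mem_iff.1 hv with rfl | rfl <;> simp at hL
      · exact Sym2.mem_iff.1 hv
    have e1 := adj_side awx
    have e2 := adj_side axy
    cases hL : w.isLeft with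
    | true =>
      rcases keyL w hw hL with rfl | rfl <;>
        rcases keyL x hx (e1 ▸ hL) with h | h <;>
          rcases keyL y hy (e2 ▸ e1 ▸ hL) with h' | h' <;> subst h <;> subst h' <;>
            first | exact hwx rfl | exact hwy rfl | exact hxy rfl
    | false =>
      rcases keyR w hw hL with rfl | rfl <;>
        rcases keyR x hx (e1 ▸ hL) with h | h <;>
          rcases keyR y hy (e2 ▸ e1 ▸ hL) with h' | h' <;> subst h <;> subst h' <;>
            first | exact hwx rfl | exact hwy rfl | exact hxy rfl

lemma not_epPair_left {a b c d : Fin m} (hab : a ≠ b) (hcd : c ≠ d)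
    (hac : a ≠ c) (had : a ≠ d) (hbc : b ≠ c) (hbd : b ≠ d) :
    ¬ epPair (GG m n) s(.inl a, .inl b) s(.inl c, .inl d) := by
  rintro (⟨v, hv1, hv2⟩ | ⟨_, hnc⟩)
  · rcases Sym2.mem_iff.1 hv1 with rfl | rfl <;>
      rcases Sym2.mem_iff.1 hv2 with h | h <;>
        simp only [Sum.inl.injEq] at h <;> tauto
  · refine hnc ⟨.inl a, .inl c, .inl b, .inl d, ?_, ?_, ?_, ?_, ?_, ?_, ?_, ?_, ?_, ?_,
      ?_, ?_, ?_, ?_⟩ <;>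
      simp [adj_ll, hab, hcd, hac, had, hbc, hbd, hab.symm, hcd.symm, hac.symm, had.symm,
        hbc.symm, hbd.symm, Sym2.mem_iff]

lemma not_epPair_right {a b c d : Fin n} (hab : a ≠ b) (hcd : c ≠ d)
    (hac : a ≠ c) (had : a ≠ d) (hbc : b ≠ c) (hbd : b ≠ d) :
    ¬ epPair (GG m n) s(.inr a, .inr b) s(.inr c, .inr d) := by
  rintro (⟨v, hv1, hv2⟩ | ⟨_, hnc⟩)
  · rcases Sym2.mem_iff.1 hv1 with rfl | rfl <;>
      rcases Sym2.mem_iff.1 hv2 with h | h <;>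
        simp only [Sum.inr.injEq] at h <;> tauto
  · refine hnc ⟨.inr a, .inr c, .inr b, .inr d, ?_, ?_, ?_, ?_, ?_, ?_, ?_, ?_, ?_, ?_,
      ?_, ?_, ?_, ?_⟩ <;>
      simp [adj_rr, hab, hcd, hac, had, hbc, hbd, hab.symm, hcd.symm, hac.symm, had.symm,
        hbc.symm, hbd.symm, Sym2.mem_iff]

noncomputable def AA (m n : ℕ) : Finset (Finset (Sym2 (VV m n))) :=
  ((GG m n).edgeFinset.powersetCard 2).filter
    (fun s => ∀ e ∈ s, ∀ f ∈ s, e ≠ f → epPair (GG m n) e f)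

lemma card_left : ((AA m n).filter (fun s => s ⊆ FL m n)).card = m * (m - 1).choose 2 := by
  have hcard : ((univ : Finset (Fin m)).sigma
      (fun v => (univ.erase v).powersetCard 2)).card = m * (m - 1).choose 2 := by
    rw [Finset.card_sigma]
    rw [Finset.sum_congr rfl (fun v _ => by
      rw [Finset.card_powersetCard, card_erase_of_mem (mem_univ v), card_univ,
        Fintype.card_fin])]
    rw [Finset.sum_const, card_univ, Fintype.card_fin, smul_eq_mul]
  rw [← hcard]
  refine (Finset.card_bij
    (fun p _ => p.2.image (fun a => s((Sum.inl p.1 : VV m n), Sum.inl a))) ?_ ?_ ?_).symm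
  · rintro ⟨v, t⟩ hp
    rw [Finset.mem_sigma, Finset.mem_powersetCard] at hp
    obtain ⟨-, hsub, hc⟩ := hp
    obtain ⟨a, b, hab, rfl⟩ := Finset.card_eq_two.1 hc
    have hva : a ≠ v := Finset.ne_of_mem_erase (hsub (by simp))
    have hvb : b ≠ v := Finset.ne_of_mem_erase (hsub (by simp))
    have himg : ({a, b} : Finset (Fin m)).image
        (fun a => s((Sum.inl v : VV m n), Sum.inl a)) =
        {s((Sum.inl v : VV m n), Sum.inl a), s((Sum.inl v : VV m n), Sum.inl b)} := by
      simp
    dsimp only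
    rw [himg, mem_filter, AA, mem_filter, Finset.mem_powersetCard]
    have heL : s((Sum.inl v : VV m n), Sum.inl a) ∈ FL m n :=
      mem_FL.2 ⟨v, a, hva.symm, rfl⟩
    have hfL : s((Sum.inl v : VV m n), Sum.inl b) ∈ FL m n :=
      mem_FL.2 ⟨v, b, hvb.symm, rfl⟩
    have hne : s((Sum.inl v : VV m n), Sum.inl a) ≠ s((Sum.inl v : VV m n), Sum.inl b) := by
      rw [Ne, sym2_inl_eq]
      rintro (⟨-, h⟩ | ⟨h, -⟩)
      · exact hab h
      · exact hvb h.symm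
    have hsubL : ({s((Sum.inl v : VV m n), Sum.inl a),
        s((Sum.inl v : VV m n), Sum.inl b)} : Finset _) ⊆ FL m n := by
      intro e' he'
      rcases Finset.mem_insert.1 he' with rfl | he'
      · exact heL
      · rw [Finset.mem_singleton] at he'; subst he'; exact hfL
    refine ⟨⟨⟨hsubL.trans FL_sub, ?_⟩, ?_⟩, hsubL⟩
    · rw [Finset.card_insert_of_notMem (by simpa using hne), Finset.card_singleton]
    · have hv : ∀ e' ∈ ({s((Sum.inl v : VV m n), Sum.inl a),
          s((Sum.inl v : VV m n), Sum.inl b)} : Finset _), Sum.inl v ∈ e' := by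
        intro e' he'
        rcases Finset.mem_insert.1 he' with rfl | he'
        · simp
        · rw [Finset.mem_singleton] at he'; subst he'; simp
      intro e' he' f' hf' _
      exact Or.inl ⟨Sum.inl v, hv e' he', hv f' hf'⟩
  · rintro ⟨v, t⟩ hp ⟨v', t'⟩ hp' heq
    dsimp only at heq
    rw [Finset.mem_sigma, Finset.mem_powersetCard] at hp hp'
    obtain ⟨-, hsub, hc⟩ := hp
    obtain ⟨-, hsub', hc'⟩ := hp'
    have key : ∀ x ∈ t, ∃ y ∈ t', s((Sum.inl v : VV m n), Sum.inl x) =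
        s((Sum.inl v' : VV m n), Sum.inl y) := by
      intro x hx
      have := heq ▸ Finset.mem_image_of_mem
        (fun a => s((Sum.inl v : VV m n), Sum.inl a)) hx
      obtain ⟨y, hy, hEq⟩ := Finset.mem_image.1 this
      exact ⟨y, hy, hEq.symm⟩
    have hvv : v = v' := by
      by_contra hvv
      obtain ⟨a, b, hab, rfl⟩ := Finset.card_eq_two.1 hc
      obtain ⟨ya, -, ha⟩ := key a (by simp)
      obtain ⟨yb, -, hb⟩ := key b (by simp)
      rw [sym2_inl_eq] at ha hb
      have hav' : a = v' := by
        rcases ha with ⟨h, -⟩ | ⟨-, h⟩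
        · exact (hvv h).elim
        · exact h
      have hbv' : b = v' := by
        rcases hb with ⟨h, -⟩ | ⟨-, h⟩
        · exact (hvv h).elim
        · exact h
      exact hab (hav'.trans hbv'.symm)
    subst hvv
    have htt : t = t' := by
      refine Finset.eq_of_subset_of_card_le ?_ (by rw [hc, hc'])
      intro x hx
      obtain ⟨y, hy, hEq⟩ := key x hx
      rw [sym2_inl_eq] at hEq
      rcases hEq with ⟨-, h⟩ | ⟨h, hx'⟩
      · exact h ▸ hy
      · exact absurd hx' (Finset.ne_of_mem_erase (hsub hx))
    rw [htt]
  · intro s hs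
    rw [mem_filter] at hs
    obtain ⟨hsA, hsL⟩ := hs
    rw [AA, mem_filter, Finset.mem_powersetCard] at hsA
    obtain ⟨⟨hsub, hc⟩, hP⟩ := hsA
    obtain ⟨e, f, hef, rfl⟩ := Finset.card_eq_two.1 hc
    have heL : e ∈ FL m n := hsL (by simp)
    have hfL : f ∈ FL m n := hsL (by simp)
    obtain ⟨a, b, hab, rfl⟩ := mem_FL.1 heL
    obtain ⟨c, d, hcd, hfeq⟩ := mem_FL.1 hfL
    subst hfeq
    have hpair := hP _ (by simp) _ (by simp) hef
    have build : ∀ (v x y : Fin m), v ≠ x → v ≠ y → x ≠ y →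
        ∃ p, ∃ (hp : p ∈ (univ : Finset (Fin m)).sigma
            (fun v => (univ.erase v).powersetCard 2)),
          (p.2.image fun a => s((Sum.inl p.1 : VV m n), Sum.inl a)) =
            {s((Sum.inl v : VV m n), Sum.inl x), s((Sum.inl v : VV m n), Sum.inl y)} := by
      intro v x y hvx hvy hxy
      refine ⟨⟨v, {x, y}⟩, ?_, by simp⟩
      rw [Finset.mem_sigma, Finset.mem_powersetCard]
      refine ⟨mem_univ v, ?_, ?_⟩
      · intro z hz
        rcases Finset.mem_insert.1 hz with rfl | hz
        · exact Finset.mem_erase.2 ⟨hvx.symm, mem_univ _⟩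
        · rw [Finset.mem_singleton] at hz; subst hz
          exact Finset.mem_erase.2 ⟨hvy.symm, mem_univ _⟩
      · rw [Finset.card_insert_of_notMem (by simp [hxy]), Finset.card_singleton]
    have hshare : ∃ w, w ∈ s((Sum.inl a : VV m n), Sum.inl b) ∧
        w ∈ s((Sum.inl c : VV m n), Sum.inl d) := by
      by_contra hns
      have hac : a ≠ c := fun h => hns ⟨Sum.inl a, by simp, by simp [h]⟩
      have had : a ≠ d := fun h => hns ⟨Sum.inl a, by simp, by simp [h]⟩
      have hbc : b ≠ c := fun h => hns ⟨Sum.inl b, by simp, by simp [h]⟩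
      have hbd : b ≠ d := fun h => hns ⟨Sum.inl b, by simp, by simp [h]⟩
      exact not_epPair_left hab hcd hac had hbc hbd hpair
    obtain ⟨w, hw1, hw2⟩ := hshare
    rcases Sym2.mem_iff.1 hw1 with rfl | rfl <;>
      rcases Sym2.mem_iff.1 hw2 with h | h <;> rw [Sum.inl.injEq] at h
    · -- a = c
      subst h
      have hbd : b ≠ d := fun hbd => hef (by rw [hbd])
      obtain ⟨p, hp, himg⟩ := build a b d hab hcd hbd
      exact ⟨p, hp, by rw [himg]⟩
    · -- a = d
      subst h
      have hbc : b ≠ c := fun hbc => hef (by rw [hbc, Sym2.eq_swap])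
      obtain ⟨p, hp, himg⟩ := build a b c hab (fun h => hcd h.symm) hbc
      refine ⟨p, hp, ?_⟩
      rw [himg, show s((Sum.inl c : VV m n), Sum.inl a) = s(Sum.inl a, Sum.inl c) from
        Sym2.eq_swap]
    · -- b = c
      subst h
      have had : a ≠ d := fun had => hef (by rw [had, Sym2.eq_swap])
      obtain ⟨p, hp, himg⟩ := build b a d (fun h => hab h.symm) hcd had
      refine ⟨p, hp, ?_⟩
      rw [himg, show s((Sum.inl a : VV m n), Sum.inl b) = s(Sum.inl b, Sum.inl a) from
        Sym2.eq_swap]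
    · -- b = d
      subst h
      have hac : a ≠ c := fun hac => hef (by rw [hac])
      obtain ⟨p, hp, himg⟩ := build b a c (fun h => hab h.symm) (fun h => hcd h.symm) hac
      refine ⟨p, hp, ?_⟩
      rw [himg, show s((Sum.inl a : VV m n), Sum.inl b) = s(Sum.inl b, Sum.inl a) from
        Sym2.eq_swap, show s((Sum.inl c : VV m n), Sum.inl b) = s(Sum.inl b, Sum.inl c) from
        Sym2.eq_swap]

lemma card_right : ((AA m n).filter (fun s => s ⊆ FR m n)).card = n * (n - 1).choose 2 := by
  have hcard : ((univ : Finset (Fin n)).sigma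
      (fun v => (univ.erase v).powersetCard 2)).card = n * (n - 1).choose 2 := by
    rw [Finset.card_sigma]
    rw [Finset.sum_congr rfl (fun v _ => by
      rw [Finset.card_powersetCard, card_erase_of_mem (mem_univ v), card_univ,
        Fintype.card_fin])]
    rw [Finset.sum_const, card_univ, Fintype.card_fin, smul_eq_mul]
  rw [← hcard]
  refine (Finset.card_bij
    (fun p _ => p.2.image (fun a => s((Sum.inr p.1 : VV m n), Sum.inr a))) ?_ ?_ ?_).symm
  · rintro ⟨v, t⟩ hp
    rw [Finset.mem_sigma, Finset.mem_powersetCard] at hp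
    obtain ⟨-, hsub, hc⟩ := hp
    obtain ⟨a, b, hab, rfl⟩ := Finset.card_eq_two.1 hc
    have hva : a ≠ v := Finset.ne_of_mem_erase (hsub (by simp))
    have hvb : b ≠ v := Finset.ne_of_mem_erase (hsub (by simp))
    have himg : ({a, b} : Finset (Fin n)).image
        (fun a => s((Sum.inr v : VV m n), Sum.inr a)) =
        {s((Sum.inr v : VV m n), Sum.inr a), s((Sum.inr v : VV m n), Sum.inr b)} := by
      simp
    dsimp only
    rw [himg, mem_filter, AA, mem_filter, Finset.mem_powersetCard]
    have heL : s((Sum.inr v : VV m n), Sum.inr a) ∈ FR m n :=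
      mem_FR.2 ⟨v, a, hva.symm, rfl⟩
    have hfL : s((Sum.inr v : VV m n), Sum.inr b) ∈ FR m n :=
      mem_FR.2 ⟨v, b, hvb.symm, rfl⟩
    have hne : s((Sum.inr v : VV m n), Sum.inr a) ≠ s((Sum.inr v : VV m n), Sum.inr b) := by
      rw [Ne, sym2_inr_eq]
      rintro (⟨-, h⟩ | ⟨h, -⟩)
      · exact hab h
      · exact hvb h.symm
    have hsubL : ({s((Sum.inr v : VV m n), Sum.inr a),
        s((Sum.inr v : VV m n), Sum.inr b)} : Finset _) ⊆ FR m n := by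
      intro e' he'
      rcases Finset.mem_insert.1 he' with rfl | he'
      · exact heL
      · rw [Finset.mem_singleton] at he'; subst he'; exact hfL
    refine ⟨⟨⟨hsubL.trans FR_sub, ?_⟩, ?_⟩, hsubL⟩
    · rw [Finset.card_insert_of_notMem (by simpa using hne), Finset.card_singleton]
    · have hv : ∀ e' ∈ ({s((Sum.inr v : VV m n), Sum.inr a),
          s((Sum.inr v : VV m n), Sum.inr b)} : Finset _), Sum.inr v ∈ e' := by
        intro e' he'
        rcases Finset.mem_insert.1 he' with rfl | he'
        · simp
        · rw [Finset.mem_singleton] at he'; subst he'; simp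
      intro e' he' f' hf' _
      exact Or.inl ⟨Sum.inr v, hv e' he', hv f' hf'⟩
  · rintro ⟨v, t⟩ hp ⟨v', t'⟩ hp' heq
    dsimp only at heq
    rw [Finset.mem_sigma, Finset.mem_powersetCard] at hp hp'
    obtain ⟨-, hsub, hc⟩ := hp
    obtain ⟨-, hsub', hc'⟩ := hp'
    have key : ∀ x ∈ t, ∃ y ∈ t', s((Sum.inr v : VV m n), Sum.inr x) =
        s((Sum.inr v' : VV m n), Sum.inr y) := by
      intro x hx
      have := heq ▸ Finset.mem_image_of_mem
        (fun a => s((Sum.inr v : VV m n), Sum.inr a)) hx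
      obtain ⟨y, hy, hEq⟩ := Finset.mem_image.1 this
      exact ⟨y, hy, hEq.symm⟩
    have hvv : v = v' := by
      by_contra hvv
      obtain ⟨a, b, hab, rfl⟩ := Finset.card_eq_two.1 hc
      obtain ⟨ya, -, ha⟩ := key a (by simp)
      obtain ⟨yb, -, hb⟩ := key b (by simp)
      rw [sym2_inr_eq] at ha hb
      have hav' : a = v' := by
        rcases ha with ⟨h, -⟩ | ⟨-, h⟩
        · exact (hvv h).elim
        · exact h
      have hbv' : b = v' := by
        rcases hb with ⟨h, -⟩ | ⟨-, h⟩
        · exact (hvv h).elim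
        · exact h
      exact hab (hav'.trans hbv'.symm)
    subst hvv
    have htt : t = t' := by
      refine Finset.eq_of_subset_of_card_le ?_ (by rw [hc, hc'])
      intro x hx
      obtain ⟨y, hy, hEq⟩ := key x hx
      rw [sym2_inr_eq] at hEq
      rcases hEq with ⟨-, h⟩ | ⟨h, hx'⟩
      · exact h ▸ hy
      · exact absurd hx' (Finset.ne_of_mem_erase (hsub hx))
    rw [htt]
  · intro s hs
    rw [mem_filter] at hs
    obtain ⟨hsA, hsL⟩ := hs
    rw [AA, mem_filter, Finset.mem_powersetCard] at hsA
    obtain ⟨⟨hsub, hc⟩, hP⟩ := hsA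
    obtain ⟨e, f, hef, rfl⟩ := Finset.card_eq_two.1 hc
    have heL : e ∈ FR m n := hsL (by simp)
    have hfL : f ∈ FR m n := hsL (by simp)
    obtain ⟨a, b, hab, rfl⟩ := mem_FR.1 heL
    obtain ⟨c, d, hcd, hfeq⟩ := mem_FR.1 hfL
    subst hfeq
    have hpair := hP _ (by simp) _ (by simp) hef
    have build : ∀ (v x y : Fin n), v ≠ x → v ≠ y → x ≠ y →
        ∃ p, ∃ (hp : p ∈ (univ : Finset (Fin n)).sigma
            (fun v => (univ.erase v).powersetCard 2)),
          (p.2.image fun a => s((Sum.inr p.1 : VV m n), Sum.inr a)) =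
            {s((Sum.inr v : VV m n), Sum.inr x), s((Sum.inr v : VV m n), Sum.inr y)} := by
      intro v x y hvx hvy hxy
      refine ⟨⟨v, {x, y}⟩, ?_, by simp⟩
      rw [Finset.mem_sigma, Finset.mem_powersetCard]
      refine ⟨mem_univ v, ?_, ?_⟩
      · intro z hz
        rcases Finset.mem_insert.1 hz with rfl | hz
        · exact Finset.mem_erase.2 ⟨hvx.symm, mem_univ _⟩
        · rw [Finset.mem_singleton] at hz; subst hz
          exact Finset.mem_erase.2 ⟨hvy.symm, mem_univ _⟩
      · rw [Finset.card_insert_of_notMem (by simp [hxy]), Finset.card_singleton]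
    have hshare : ∃ w, w ∈ s((Sum.inr a : VV m n), Sum.inr b) ∧
        w ∈ s((Sum.inr c : VV m n), Sum.inr d) := by
      by_contra hns
      have hac : a ≠ c := fun h => hns ⟨Sum.inr a, by simp, by simp [h]⟩
      have had : a ≠ d := fun h => hns ⟨Sum.inr a, by simp, by simp [h]⟩
      have hbc : b ≠ c := fun h => hns ⟨Sum.inr b, by simp, by simp [h]⟩
      have hbd : b ≠ d := fun h => hns ⟨Sum.inr b, by simp, by simp [h]⟩
      exact not_epPair_right hab hcd hac had hbc hbd hpair
    obtain ⟨w, hw1, hw2⟩ := hshare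
    rcases Sym2.mem_iff.1 hw1 with rfl | rfl <;>
      rcases Sym2.mem_iff.1 hw2 with h | h <;> rw [Sum.inr.injEq] at h
    · subst h
      have hbd : b ≠ d := fun hbd => hef (by rw [hbd])
      obtain ⟨p, hp, himg⟩ := build a b d hab hcd hbd
      exact ⟨p, hp, by rw [himg]⟩
    · subst h
      have hbc : b ≠ c := fun hbc => hef (by rw [hbc, Sym2.eq_swap])
      obtain ⟨p, hp, himg⟩ := build a b c hab (fun h => hcd h.symm) hbc
      refine ⟨p, hp, ?_⟩
      rw [himg, show s((Sum.inr c : VV m n), Sum.inr a) = s(Sum.inr a, Sum.inr c) from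
        Sym2.eq_swap]
    · subst h
      have had : a ≠ d := fun had => hef (by rw [had, Sym2.eq_swap])
      obtain ⟨p, hp, himg⟩ := build b a d (fun h => hab h.symm) hcd had
      refine ⟨p, hp, ?_⟩
      rw [himg, show s((Sum.inr a : VV m n), Sum.inr b) = s(Sum.inr b, Sum.inr a) from
        Sym2.eq_swap]
    · subst h
      have hac : a ≠ c := fun hac => hef (by rw [hac])
      obtain ⟨p, hp, himg⟩ := build b a c (fun h => hab h.symm) (fun h => hcd h.symm) hac
      refine ⟨p, hp, ?_⟩
      rw [himg, show s((Sum.inr a : VV m n), Sum.inr b) = s(Sum.inr b, Sum.inr a) from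
        Sym2.eq_swap, show s((Sum.inr c : VV m n), Sum.inr b) = s(Sum.inr b, Sum.inr c) from
        Sym2.eq_swap]

lemma card_cross : ((AA m n).filter (fun s => ¬ s ⊆ FL m n ∧ ¬ s ⊆ FR m n)).card
    = m.choose 2 * n.choose 2 := by
  rw [← card_FL (m := m) (n := n), ← card_FR (m := m) (n := n), ← Finset.card_product]
  refine (Finset.card_bij (fun p _ => ({p.1, p.2} : Finset (Sym2 (VV m n)))) ?_ ?_ ?_).symm
  · rintro ⟨e, f⟩ hp
    rw [Finset.mem_product] at hp
    obtain ⟨he, hf⟩ := hp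
    have hef : e ≠ f := fun h => Finset.disjoint_left.1 FL_disj_FR he (h ▸ hf)
    obtain ⟨a, b, hab, rfl⟩ := mem_FL.1 he
    obtain ⟨c, d, hcd, rfl⟩ := mem_FR.1 hf
    dsimp only
    rw [mem_filter, AA, mem_filter, Finset.mem_powersetCard]
    refine ⟨⟨⟨?_, ?_⟩, ?_⟩, ?_, ?_⟩
    · intro x hx
      rcases Finset.mem_insert.1 hx with rfl | hx
      · exact FL_sub he
      · rw [Finset.mem_singleton] at hx; subst hx; exact FR_sub hf
    · rw [Finset.card_insert_of_notMem (by simpa using hef), Finset.card_singleton]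
    · intro e' he' f' hf' hne
      simp only [Finset.mem_insert, Finset.mem_singleton] at he' hf'
      rcases he' with rfl | rfl <;> rcases hf' with rfl | rfl
      · exact (hne rfl).elim
      · exact epPair_cross
      · exact epPair_symm epPair_cross
      · exact (hne rfl).elim
    · intro hsubL
      exact Finset.disjoint_left.1 FL_disj_FR (hsubL (by simp)) hf
    · intro hsubR
      exact Finset.disjoint_left.1 FL_disj_FR he (hsubR (by simp))
  · rintro ⟨e, f⟩ hp ⟨e', f'⟩ hp' heq
    rw [Finset.mem_product] at hp hp'
    obtain ⟨he, hf⟩ := hp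
    obtain ⟨he', hf'⟩ := hp'
    dsimp only at heq
    have h1 : e' ∈ ({e, f} : Finset (Sym2 (VV m n))) := heq ▸ (by simp)
    have h2 : f' ∈ ({e, f} : Finset (Sym2 (VV m n))) := heq ▸ (by simp)
    have hee : e' = e := by
      rcases Finset.mem_insert.1 h1 with h | h
      · exact h
      · rw [Finset.mem_singleton] at h; subst h
        exact absurd hf (fun hf => Finset.disjoint_left.1 FL_disj_FR he' hf)
    have hff : f' = f := by
      rcases Finset.mem_insert.1 h2 with h | h
      · subst h
        exact absurd hf' (fun hf' => Finset.disjoint_left.1 FL_disj_FR he hf')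
      · rwa [Finset.mem_singleton] at h
    rw [Prod.mk.injEq]
    exact ⟨hee.symm, hff.symm⟩
  · intro s hs
    rw [mem_filter] at hs
    obtain ⟨hsA, hnL, hnR⟩ := hs
    rw [AA, mem_filter, Finset.mem_powersetCard] at hsA
    obtain ⟨⟨hsub, hc⟩, -⟩ := hsA
    obtain ⟨e, f, hef, rfl⟩ := Finset.card_eq_two.1 hc
    have he : e ∈ FL m n ∪ FR m n := FL_union_FR ▸ hsub (by simp)
    have hf : f ∈ FL m n ∪ FR m n := FL_union_FR ▸ hsub (by simp)
    rcases Finset.mem_union.1 he with heL | heR <;> rcases Finset.mem_union.1 hf with hfL | hfR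
    · exact absurd (fun x hx => by
        rcases Finset.mem_insert.1 hx with rfl | hx
        · exact heL
        · rw [Finset.mem_singleton] at hx; subst hx; exact hfL) hnL
    · exact ⟨(e, f), Finset.mem_product.2 ⟨heL, hfR⟩, rfl⟩
    · exact ⟨(f, e), Finset.mem_product.2 ⟨hfL, heR⟩, Finset.pair_comm f e⟩
    · exact absurd (fun x hx => by
        rcases Finset.mem_insert.1 hx with rfl | hx
        · exact heR
        · rw [Finset.mem_singleton] at hx; subst hx; exact hfR) hnR

lemma filter_right_eq :
    (AA m n).filter (fun s => ¬ s ⊆ FL m n ∧ s ⊆ FR m n)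
      = (AA m n).filter (fun s => s ⊆ FR m n) := by
  apply Finset.filter_congr
  intro s hs
  rw [AA, mem_filter, Finset.mem_powersetCard] at hs
  obtain ⟨⟨-, hc⟩, -⟩ := hs
  constructor
  · rintro ⟨-, h⟩; exact h
  · intro hR
    refine ⟨?_, hR⟩
    intro hL
    obtain ⟨x, hx⟩ := Finset.card_pos.1 (by rw [hc]; norm_num)
    exact Finset.disjoint_left.1 FL_disj_FR (hL hx) (hR hx)

lemma card_AA : (AA m n).card
    = m * (m - 1).choose 2 + n * (n - 1).choose 2 + m.choose 2 * n.choose 2 := by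
  have h1 := Finset.card_filter_add_card_filter_not
    (s := AA m n) (p := fun s => s ⊆ FL m n)
  have h2 := Finset.card_filter_add_card_filter_not
    (s := (AA m n).filter (fun s => ¬ s ⊆ FL m n)) (p := fun s => s ⊆ FR m n)
  rw [Finset.filter_filter, Finset.filter_filter, filter_right_eq, card_right,
    card_cross] at h2
  rw [card_left] at h1
  omega

lemma edgeFinset_indep {V : Type*} (G : SimpleGraph V) (i1 i2 : Fintype G.edgeSet) :
    @SimpleGraph.edgeFinset _ G i1 = @SimpleGraph.edgeFinset _ G i2 := by
  ext e
  rw [SimpleGraph.edgeFinset, SimpleGraph.edgeFinset, @Set.mem_toFinset _ _ i1,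
    @Set.mem_toFinset _ _ i2]

lemma card_filter_powersetCard_indep {α : Type*} (s t : Finset α) (h : s = t)
    (p : Finset α → Prop) (i1 i2 : DecidablePred p) :
    (@Finset.filter _ p i1 (s.powersetCard 2)).card
      = (@Finset.filter _ p i2 (t.powersetCard 2)).card := by
  subst h
  have : i1 = i2 := Subsingleton.elim i1 i2
  subst this
  rfl

lemma arith (m : ℕ) : m * (m - 1).choose 2 = m * (m - 1) * (m - 2) / 2 := by
  rw [Nat.choose_two_right]
  have h3 : m - 1 - 1 = m - 2 := by omega
  have h2 : 2 ∣ (m - 1) * (m - 2) := by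
    cases h : m - 1 with
    | zero => simp [h]
    | succ k =>
      have hk : m - 2 = k := by omega
      rw [hk]
      exact mul_comm (k + 1) k ▸ (Nat.even_mul_succ_self k).two_dvd
  rw [h3, ← Nat.mul_div_assoc m h2, ← mul_assoc]

end EpsAux

theorem epsilon_disjoint_cliques (m n : ℕ) :
    epsilon ((completeBipartiteGraph (Fin m) (Fin n))ᶜ)
      = m * (m - 1) * (m - 2) / 2 + n * (n - 1) * (n - 2) / 2
        + m.choose 2 * n.choose 2 := by
  have h : epsilon ((completeBipartiteGraph (Fin m) (Fin n))ᶜ) = (EpsAux.AA m n).card := by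
    delta epsilon EpsAux.AA
    exact EpsAux.card_filter_powersetCard_indep _ _ (EpsAux.edgeFinset_indep _ _ _) _ _ _
  rw [h, EpsAux.card_AA, EpsAux.arith, EpsAux.arith]
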